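/- arXiv:1810.07288 — 2 statements merged into one kernel-verified Lean document; each statement's English description precedes it below -/
import Mathlib

section
/- (Linear rate under PL and SGC) If f is L-smooth, satisfies the PL inequality ‖∇f(w)‖² ≥ 2μ[f(w) − f*], and its stochastic gradients satisfy the strong growth condition E_z‖∇f(w,z)‖² ≤ ρ‖∇f(w)‖², then SGD with constant step-size η = 1/(ρL) satisfies E[f(w_{k+1}) − f*] ≤ (1 − μ/(ρL))^{k+1} [f(w₀) − f*]. -/
open scoped RealInnerProductSpace
open Finset

variable {E : Type*} [NormedAddCommGroup E] [InnerProductSpace ℝ E] [CompleteSpace E]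

theorem descent_lemma (f : E → ℝ) (f' : E → E) (L : ℝ) (hL : 0 ≤ L)
    (hgrad : ∀ v, HasGradientAt f (f' v) v)
    (hlip : LipschitzWith (Real.toNNReal L) f') (x v : E) :
    f (x + v) ≤ f x + ⟪f' x, v⟫ + L / 2 * ‖v‖ ^ 2 := by
  have hcont : Continuous f' := hlip.continuous
  have hφ : ∀ t : ℝ, HasDerivAt (fun t : ℝ => f (x + t • v)) ⟪f' (x + t • v), v⟫ t := by
    intro t
    have h1 : HasDerivAt (fun t : ℝ => x + t • v) v t := by
      simpa using ((hasDerivAt_id t).smul_const v).const_add x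
    have h2 := ((hgrad (x + t • v)).hasFDerivAt.comp_hasDerivAt t h1)
    simp at h2; exact h2
  have hint : f (x + v) - f x = ∫ t in (0:ℝ)..1, ⟪f' (x + t • v), v⟫ := by
    have := intervalIntegral.integral_eq_sub_of_hasDerivAt (a := 0) (b := 1)
      (f := fun t : ℝ => f (x + t • v)) (f' := fun t => ⟪f' (x + t • v), v⟫)
      (fun t _ => hφ t) ?_
    · simp at this; rw [this]
    · apply Continuous.intervalIntegrable
      exact (hcont.comp (continuous_const.add (continuous_id.smul continuous_const))).inner
        continuous_const
  have hbound : ∀ t ∈ Set.Icc (0:ℝ) 1,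
      ⟪f' (x + t • v), v⟫ ≤ ⟪f' x, v⟫ + L * t * ‖v‖ ^ 2 := by
    intro t ht
    have h1 : ⟪f' (x + t • v), v⟫ - ⟪f' x, v⟫ = ⟪f' (x + t • v) - f' x, v⟫ := by
      rw [inner_sub_left]
    have h2 : ‖f' (x + t • v) - f' x‖ ≤ L * (t * ‖v‖) := by
      have := hlip.dist_le_mul (x + t • v) x
      simp only [dist_eq_norm] at this
      rw [show x + t • v - x = t • v by abel] at this
      calc ‖f' (x + t • v) - f' x‖ ≤ (Real.toNNReal L : ℝ) * ‖t • v‖ := this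
        _ = L * (|t| * ‖v‖) := by rw [Real.coe_toNNReal _ hL, norm_smul]; simp
        _ = L * (t * ‖v‖) := by rw [abs_of_nonneg ht.1]
    nlinarith [real_inner_le_norm (f' (x + t • v) - f' x) v, norm_nonneg v, h1,
      mul_le_mul_of_nonneg_right h2 (norm_nonneg v)]
  have hintle : (∫ t in (0:ℝ)..1, ⟪f' (x + t • v), v⟫)
      ≤ ∫ t in (0:ℝ)..1, (⟪f' x, v⟫ + L * t * ‖v‖ ^ 2) := by
    apply intervalIntegral.integral_mono_on (by norm_num)
    · apply Continuous.intervalIntegrable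
      exact (hcont.comp (continuous_const.add (continuous_id.smul continuous_const))).inner
        continuous_const
    · apply Continuous.intervalIntegrable
      continuity
    · exact hbound
  have hval : (∫ t in (0:ℝ)..1, (⟪f' x, v⟫ + L * t * ‖v‖ ^ 2)) = ⟪f' x, v⟫ + L / 2 * ‖v‖ ^ 2 := by
    rw [intervalIntegral.integral_add (by apply Continuous.intervalIntegrable; continuity)
      (by apply Continuous.intervalIntegrable; continuity)]
    simp only [intervalIntegral.integral_const, smul_eq_mul]
    have : (∫ t in (0:ℝ)..1, L * t * ‖v‖ ^ 2) = L * (1/2) * ‖v‖ ^ 2 := by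
      have : (fun t : ℝ => L * t * ‖v‖ ^ 2) = fun t : ℝ => (L * ‖v‖ ^ 2) * t := by
        ext t; ring
      rw [this, intervalIntegral.integral_const_mul, integral_id]
      ring
    rw [this]; ring
  linarith [hint ▸ hintle.trans_eq hval]

theorem step_bound {n : ℕ} (hn : 0 < n) (f : E → ℝ) (f' : E → E) (G : E → Fin n → E)
    (ρ L μ fstar η : ℝ)
    (hL : 0 < L) (hρ : 1 ≤ ρ) (hμ : 0 < μ)
    (hgrad : ∀ v, HasGradientAt f (f' v) v)
    (hlip : LipschitzWith (Real.toNNReal L) f')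
    (hbelow : ∀ v, fstar ≤ f v)
    (hpl : ∀ v, ‖f' v‖ ^ 2 ≥ 2 * μ * (f v - fstar))
    (hunbiased : ∀ v, (1 / (n : ℝ)) • ∑ z, G v z = f' v)
    (hsgc : ∀ v, (1 / (n : ℝ)) * ∑ z, ‖G v z‖ ^ 2 ≤ ρ * ‖f' v‖ ^ 2)
    (hη : η = 1 / (ρ * L)) (w : E) :
    ∑ z, f (w - η • G w z) ≤ (n : ℝ) * ((1 - μ / (ρ * L)) * (f w - fstar) + fstar) := by
  have hnR : (0:ℝ) < (n : ℝ) := by exact_mod_cast hn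
  have hρL : (0:ℝ) < ρ * L := by positivity
  have hηpos : 0 < η := by rw [hη]; positivity
  -- per-z descent bound
  have hz : ∀ z : Fin n, f (w - η • G w z)
      ≤ f w - η * ⟪f' w, G w z⟫ + L / 2 * η ^ 2 * ‖G w z‖ ^ 2 := by
    intro z
    have := descent_lemma f f' L hL.le hgrad hlip w (-(η • G w z))
    rw [← sub_eq_add_neg] at this
    refine this.trans_eq ?_
    rw [inner_neg_right, real_inner_smul_right, norm_neg, norm_smul]
    simp only [Real.norm_eq_abs, mul_pow, sq_abs]
    ring
  have hsum : ∑ z, f (w - η • G w z)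
      ≤ (n : ℝ) * f w - η * (∑ z, ⟪f' w, G w z⟫) + L / 2 * η ^ 2 * ∑ z, ‖G w z‖ ^ 2 := by
    calc ∑ z, f (w - η • G w z)
        ≤ ∑ z : Fin n, (f w - η * ⟪f' w, G w z⟫ + L / 2 * η ^ 2 * ‖G w z‖ ^ 2) :=
          Finset.sum_le_sum fun z _ => hz z
      _ = _ := by
          rw [Finset.sum_add_distrib, Finset.sum_sub_distrib, Finset.sum_const,
            ← Finset.mul_sum, ← Finset.mul_sum]
          simp [mul_comm]
  have hinner : ∑ z, ⟪f' w, G w z⟫ = (n : ℝ) * ‖f' w‖ ^ 2 := by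
    rw [← inner_sum]
    have h1 : ∑ z, G w z = (n : ℝ) • f' w := by
      rw [← hunbiased w, smul_smul]
      rw [mul_one_div, div_self hnR.ne', one_smul]
    rw [h1, real_inner_smul_right, real_inner_self_eq_norm_sq]
  have hsgc' : ∑ z, ‖G w z‖ ^ 2 ≤ (n : ℝ) * (ρ * ‖f' w‖ ^ 2) := by
    have := hsgc w
    rw [one_div, ← div_eq_inv_mul, div_le_iff₀ hnR] at this
    linarith [this]
  have hη2 : L / 2 * η ^ 2 * ρ = η / 2 := by
    rw [hη]; field_simp
  have hc : μ / (ρ * L) = μ * η := by rw [hη]; field_simp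
  have hpl' := hpl w
  have hF := hbelow w
  have hkey : L / 2 * η ^ 2 * ∑ z, ‖G w z‖ ^ 2 ≤ η / 2 * ((n:ℝ) * ‖f' w‖ ^ 2) := by
    calc L / 2 * η ^ 2 * ∑ z, ‖G w z‖ ^ 2
        ≤ L / 2 * η ^ 2 * ((n:ℝ) * (ρ * ‖f' w‖ ^ 2)) := by
          apply mul_le_mul_of_nonneg_left hsgc' (by positivity)
      _ = η / 2 * ((n:ℝ) * ‖f' w‖ ^ 2) := by rw [← hη2]; ring
  rw [hc]
  nlinarith [mul_le_mul_of_nonneg_left hpl' (by positivity : (0:ℝ) ≤ (n:ℝ) * η / 2),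
    hsum, hinner, hkey]

open scoped RealInnerProductSpace
open Finset

/-- Expectation over the first `k` steps of uniform i.i.d. noise in `Fin n`. -/
noncomputable def ExpN (n k : ℕ) (hn : 0 < n) (h : (ℕ → Fin n) → ℝ) : ℝ :=
  (∑ σ : Fin k → Fin n, h (fun i => if hi : i < k then σ ⟨i, hi⟩ else ⟨0, hn⟩)) / (n : ℝ) ^ k

/-- Linear convergence of constant step-size SGD under the PL
inequality and the strong growth condition:
`E[f(w_{k+1}) − f*] ≤ (1 − μ/(ρL))^{k+1} (f(w₀) − f*)`. -/
theorem sgd_linear_rate_pl_sgc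
    (d n : ℕ) (hn : 0 < n)
    (f : EuclideanSpace ℝ (Fin d) → ℝ)
    (f' : EuclideanSpace ℝ (Fin d) → EuclideanSpace ℝ (Fin d))
    (G : EuclideanSpace ℝ (Fin d) → Fin n → EuclideanSpace ℝ (Fin d))
    (ρ L μ fstar η : ℝ) (w0 : EuclideanSpace ℝ (Fin d))
    (W : (ℕ → Fin n) → ℕ → EuclideanSpace ℝ (Fin d))
    (hL : 0 < L) (hρ : 1 ≤ ρ) (hμ : 0 < μ)
    (hgrad : ∀ v, HasGradientAt f (f' v) v)
    (hlip : LipschitzWith (Real.toNNReal L) f')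
    (hbelow : ∀ v, fstar ≤ f v)
    (hattained : ∃ v, f v = fstar)
    (hpl : ∀ v, ‖f' v‖ ^ 2 ≥ 2 * μ * (f v - fstar))
    (hunbiased : ∀ v, (1 / (n : ℝ)) • ∑ z, G v z = f' v)
    (hsgc : ∀ v, (1 / (n : ℝ)) * ∑ z, ‖G v z‖ ^ 2 ≤ ρ * ‖f' v‖ ^ 2)
    (hη : η = 1 / (ρ * L))
    (hW0 : ∀ ω, W ω 0 = w0)
    (hWs : ∀ ω k, W ω (k + 1) = W ω k - η • G (W ω k) (ω k)) :
    ∀ k : ℕ, ExpN n (k + 1) hn (fun ω => f (W ω (k + 1))) - fstar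
      ≤ (1 - μ / (ρ * L)) ^ (k + 1) * (f w0 - fstar) := by
  have hnR : (0:ℝ) < (n : ℝ) := by exact_mod_cast hn
  have hρL : (0:ℝ) < ρ * L := by positivity
  -- extension function
  set ext : ∀ m : ℕ, (Fin m → Fin n) → (ℕ → Fin n) :=
    fun m σ i => if hi : i < m then σ ⟨i, hi⟩ else ⟨0, hn⟩ with hext
  -- W depends only on the first m coordinates
  have Wdep : ∀ (m : ℕ) (ω ω' : ℕ → Fin n), (∀ i < m, ω i = ω' i) → W ω m = W ω' m := by
    intro m
    induction m with
    | zero => intro ω ω' _; rw [hW0, hW0]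
    | succ k ih =>
      intro ω ω' hagree
      rw [hWs, hWs, ih ω ω' (fun i hi => hagree i (Nat.lt_succ_of_lt hi)),
        hagree k (Nat.lt_succ_self k)]
  by_cases hdeg : ∃ v, fstar < f v
  · -- nondegenerate case: μ ≤ L
    obtain ⟨v0, hv0⟩ := hdeg
    have hμL : μ ≤ ρ * L := by
      have hd := descent_lemma f f' L hL.le hgrad hlip v0 (-((1/L) • f' v0))
      rw [← sub_eq_add_neg, inner_neg_right, real_inner_smul_right, norm_neg, norm_smul] at hd
      simp only [Real.norm_eq_abs, mul_pow, sq_abs] at hd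
      have h1 : fstar ≤ f v0 - 1/(2*L) * ‖f' v0‖ ^ 2 := by
        have := hbelow (v0 - (1/L) • f' v0)
        have harr : f v0 + -(1 / L * ⟪f' v0, f' v0⟫) + L / 2 * ((1 / L) ^ 2 * ‖f' v0‖ ^ 2)
            = f v0 - 1/(2*L) * ‖f' v0‖ ^ 2 := by
          rw [real_inner_self_eq_norm_sq]; field_simp; ring
        linarith [hd.trans_eq harr]
      have h2 := hpl v0
      have hB : ‖f' v0‖ ^ 2 ≤ 2 * L * (f v0 - fstar) := by
        have h3 : 1/(2*L) * ‖f' v0‖ ^ 2 ≤ f v0 - fstar := by linarith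
        calc ‖f' v0‖ ^ 2 = (2*L) * (1/(2*L) * ‖f' v0‖ ^ 2) := by field_simp
          _ ≤ (2*L) * (f v0 - fstar) := mul_le_mul_of_nonneg_left h3 (by positivity)
          _ = 2 * L * (f v0 - fstar) := by ring
      have hμ1 : μ ≤ L := by nlinarith [hB, h2, sub_pos.mpr hv0]
      nlinarith
    set c := μ / (ρ * L) with hc
    have hc0 : 0 < c := by positivity
    have hc1 : c ≤ 1 := by rw [hc, div_le_one hρL]; exact hμL
    -- main induction
    have key : ∀ k : ℕ, ExpN n k hn (fun ω => f (W ω k)) - fstar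
        ≤ (1 - c) ^ k * (f w0 - fstar) := by
      intro k
      induction k with
      | zero => simp [ExpN, hW0]
      | succ k ih =>
        have hstep := step_bound hn f f' G ρ L μ fstar η hL hρ hμ hgrad hlip hbelow
          hpl hunbiased hsgc hη
        -- rewrite the (k+1)-fold sum as double sum
        have hsum : ∑ σ : Fin (k+1) → Fin n, f (W (ext (k+1) σ) (k+1))
            = ∑ p : Fin n × (Fin k → Fin n),
                f (W (ext k p.2) k - η • G (W (ext k p.2) k) p.1) := by
          rw [← Fintype.sum_equiv (Fin.snocEquiv fun _ => Fin n)
            (fun p => f (W (ext (k+1) (Fin.snoc p.2 p.1)) (k+1)))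
            (fun σ => f (W (ext (k+1) σ) (k+1))) (fun p => rfl)]
          apply Fintype.sum_congr
          intro ⟨z, σ⟩
          have hWk : W (ext (k+1) (Fin.snoc σ z)) k = W (ext k σ) k := by
            apply Wdep
            intro i hi
            simp only [hext]
            rw [dif_pos (Nat.lt_succ_of_lt hi), dif_pos hi]
            have : (⟨i, Nat.lt_succ_of_lt hi⟩ : Fin (k+1)) = Fin.castSucc ⟨i, hi⟩ := rfl
            rw [this, Fin.snoc_castSucc]
          have hlast : ext (k+1) (Fin.snoc σ z) k = z := by
            simp only [hext]
            rw [dif_pos (Nat.lt_succ_self k)]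
            have : (⟨k, Nat.lt_succ_self k⟩ : Fin (k+1)) = Fin.last k := rfl
            rw [this, Fin.snoc_last]
          rw [hWs, hWk, hlast]
        have hdouble : ∑ p : Fin n × (Fin k → Fin n),
              f (W (ext k p.2) k - η • G (W (ext k p.2) k) p.1)
            = ∑ σ : Fin k → Fin n, ∑ z : Fin n,
                f (W (ext k σ) k - η • G (W (ext k σ) k) z) := by
          rw [Fintype.sum_prod_type]
          exact Finset.sum_comm
        -- bound each inner sum
        have hbound : ∑ σ : Fin k → Fin n, ∑ z : Fin n,
              f (W (ext k σ) k - η • G (W (ext k σ) k) z)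
            ≤ ∑ σ : Fin k → Fin n,
                (n : ℝ) * ((1 - c) * (f (W (ext k σ) k) - fstar) + fstar) :=
          Finset.sum_le_sum fun σ _ => hstep (W (ext k σ) k)
        set N : ℝ := (n : ℝ) ^ k with hN
        have hNpos : 0 < N := by positivity
        set A : ℝ := ∑ σ : Fin k → Fin n, f (W (ext k σ) k) with hA
        have hsum2 : ∑ σ : Fin k → Fin n,
              (n : ℝ) * ((1 - c) * (f (W (ext k σ) k) - fstar) + fstar)
            = (n : ℝ) * ((1 - c) * (A - N * fstar) + N * fstar) := by
          have hcard : (((Finset.univ : Finset (Fin k → Fin n)).card : ℕ) : ℝ) = N := by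
            rw [Finset.card_univ]
            simp [hN]
          calc ∑ σ : Fin k → Fin n,
                (n : ℝ) * ((1 - c) * (f (W (ext k σ) k) - fstar) + fstar)
              = ∑ σ : Fin k → Fin n, (((n:ℝ)*(1-c)) * f (W (ext k σ) k)
                  + ((n:ℝ)*fstar - (n:ℝ)*(1-c)*fstar)) := by
                apply Finset.sum_congr rfl; intro σ _; ring
            _ = ((n:ℝ)*(1-c)) * A + N * ((n:ℝ)*fstar - (n:ℝ)*(1-c)*fstar) := by
                rw [Finset.sum_add_distrib, ← Finset.mul_sum, Finset.sum_const,
                  nsmul_eq_mul, hcard]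
            _ = (n : ℝ) * ((1 - c) * (A - N * fstar) + N * fstar) := by ring
        -- IH gives A ≤ N * ((1-c)^k * D + fstar)
        have hihA : A - N * fstar ≤ N * ((1 - c) ^ k * (f w0 - fstar)) := by
          have h0 : ExpN n k hn (fun ω => f (W ω k)) = A / N := rfl
          rw [h0] at ih
          calc A - N * fstar = N * (A / N - fstar) := by field_simp
            _ ≤ N * ((1 - c) ^ k * (f w0 - fstar)) :=
              mul_le_mul_of_nonneg_left ih hNpos.le
        have hfinal : ∑ σ : Fin (k+1) → Fin n, f (W (ext (k+1) σ) (k+1))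
            ≤ (n : ℝ) * N * ((1 - c) ^ (k+1) * (f w0 - fstar) + fstar) := by
          rw [hsum, hdouble]
          refine (hbound.trans_eq hsum2).trans ?_
          have h1 : (1 - c) * (A - N * fstar) ≤ (1 - c) * (N * ((1 - c) ^ k * (f w0 - fstar))) := by
            exact mul_le_mul_of_nonneg_left hihA (by linarith)
          calc (n : ℝ) * ((1 - c) * (A - N * fstar) + N * fstar)
              ≤ (n : ℝ) * ((1 - c) * (N * ((1 - c) ^ k * (f w0 - fstar))) + N * fstar) := by
                apply mul_le_mul_of_nonneg_left _ hnR.le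
                linarith
            _ = (n : ℝ) * N * ((1 - c) ^ (k+1) * (f w0 - fstar) + fstar) := by ring
        have hexp : ExpN n (k+1) hn (fun ω => f (W ω (k+1)))
            = (∑ σ : Fin (k+1) → Fin n, f (W (ext (k+1) σ) (k+1))) / ((n : ℝ) * N) := by
          show (∑ σ : Fin (k+1) → Fin n, f (W (ext (k+1) σ) (k+1))) / (n : ℝ) ^ (k+1) = _
          rw [hN, pow_succ]
          ring
        rw [hexp, sub_le_iff_le_add]
        rw [div_le_iff₀ (by positivity)]
        calc ∑ σ : Fin (k+1) → Fin n, f (W (ext (k+1) σ) (k+1))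
            ≤ (n : ℝ) * N * ((1 - c) ^ (k+1) * (f w0 - fstar) + fstar) := hfinal
          _ = ((1 - c) ^ (k + 1) * (f w0 - fstar) + fstar) * ((n : ℝ) * N) := by ring
    exact fun k => key (k + 1)
  · -- degenerate case: f ≡ fstar
    push_neg at hdeg
    have hfeq : ∀ v, f v = fstar := fun v => le_antisymm (hdeg v) (hbelow v)
    intro k
    have : ExpN n (k+1) hn (fun ω => f (W ω (k+1))) = fstar := by
      simp only [ExpN, hfeq]
      rw [Finset.sum_const]
      simp only [card_univ, Fintype.card_pi, Fintype.card_fin, Finset.prod_const,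
        Finset.card_univ, nsmul_eq_mul]
      push_cast
      field_simp
    rw [this, hfeq w0]
    simp
end

section
/- (Additive-noise non-convex bound) If f is L-smooth, bounded below by f*, and its unbiased stochastic gradients satisfy E_z‖∇f(w,z)‖² ≤ ρ‖∇f(w)‖² + σ², then for SGD with constant step-size η ≤ 1/(ρL) run for t iterations: min_{k<t} E‖∇f(w_k)‖² ≤ (2/(ηt))[f(w₀) − f*] + Lησ². -/
open scoped RealInnerProductSpace
open Finset

/-- The iterate after `k` SGD steps, as a function of the `k` noise values. -/
noncomputable def Vaux {d n : ℕ} (G : EuclideanSpace ℝ (Fin d) → Fin n → EuclideanSpace ℝ (Fin d))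
    (η : ℝ) (w0 : EuclideanSpace ℝ (Fin d)) : ∀ k, (Fin k → Fin n) → EuclideanSpace ℝ (Fin d)
  | 0, _ => w0
  | (k+1), σ => Vaux G η w0 k (Fin.init σ) - η • G (Vaux G η w0 k (Fin.init σ)) (σ (Fin.last k))

lemma vaux_snoc {d n k : ℕ} (G) (η : ℝ) (w0 : EuclideanSpace ℝ (Fin d)) (τ : Fin k → Fin n)
    (z : Fin n) :
    Vaux G η w0 (k+1) (Fin.snoc τ z) = Vaux G η w0 k τ - η • G (Vaux G η w0 k τ) z := by
  simp [Vaux]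

lemma sum_snoc_split {n k : ℕ} (g : (Fin (k+1) → Fin n) → ℝ) :
    ∑ σ : Fin (k+1) → Fin n, g σ = ∑ τ : Fin k → Fin n, ∑ z : Fin n, g (Fin.snoc τ z) := by
  rw [← Equiv.sum_comp (Fin.snocEquiv (fun _ => Fin n)) g, Fintype.sum_prod_type]
  rw [Finset.sum_comm]
  rfl

/-- Descent lemma for `L`-smooth functions. -/
lemma smooth_upper {d : ℕ} (f : EuclideanSpace ℝ (Fin d) → ℝ)
    (f' : EuclideanSpace ℝ (Fin d) → EuclideanSpace ℝ (Fin d))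
    (L : ℝ) (hL : 0 ≤ L)
    (hgrad : ∀ v, HasGradientAt f (f' v) v)
    (hlip : LipschitzWith (Real.toNNReal L) f') (x y : EuclideanSpace ℝ (Fin d)) :
    f y ≤ f x + ⟪f' x, y - x⟫ + L / 2 * ‖y - x‖ ^ 2 := by
  set v := y - x with hv
  set φ : ℝ → ℝ := fun s => f (x + s • v) - s * ⟪f' x, v⟫ - L * s ^ 2 / 2 * ‖v‖ ^ 2 with hφ
  have hline : ∀ s : ℝ, HasDerivAt (fun s : ℝ => x + s • v) v s := by
    intro s
    simpa using ((hasDerivAt_id s).smul_const v).const_add x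
  have hd : ∀ s : ℝ, HasDerivAt φ (⟪f' (x + s • v), v⟫ - ⟪f' x, v⟫ - L * s * ‖v‖ ^ 2) s := by
    intro s
    have h1 : HasDerivAt (fun s : ℝ => f (x + s • v)) (⟪f' (x + s • v), v⟫) s := by
      have := ((hgrad (x + s • v)).hasFDerivAt).comp_hasDerivAt s (hline s)
      simp at this
      exact this
    have h2 : HasDerivAt (fun s : ℝ => s * ⟪f' x, v⟫) (⟪f' x, v⟫) s := by
      simpa using (hasDerivAt_id s).mul_const (⟪f' x, v⟫)
    have h3 : HasDerivAt (fun s : ℝ => L * s ^ 2 / 2 * ‖v‖ ^ 2) (L * s * ‖v‖ ^ 2) s := by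
      have : HasDerivAt (fun s : ℝ => s ^ 2) (2 * s) s := by simpa using hasDerivAt_pow 2 s
      have := ((this.const_mul L).div_const 2).mul_const (‖v‖ ^ 2)
      rw [show L * (2 * s) / 2 * ‖v‖ ^ 2 = L * s * ‖v‖ ^ 2 by ring] at this
      exact this
    exact (h1.sub h2).sub h3
  have key : φ 1 ≤ φ 0 := by
    have hmono : AntitoneOn φ (Set.Icc (0:ℝ) 1) := by
      apply antitoneOn_of_deriv_nonpos (convex_Icc 0 1)
      · exact Continuous.continuousOn (Differentiable.continuous
          (fun s => (hd s).differentiableAt))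
      · intro s hs
        exact ((hd s).differentiableAt).differentiableWithinAt
      · intro s hs
        rw [interior_Icc] at hs
        rw [(hd s).deriv]
        have hinner : ⟪f' (x + s • v), v⟫ - ⟪f' x, v⟫ ≤ L * s * ‖v‖ ^ 2 := by
          have h1 : ⟪f' (x + s • v) - f' x, v⟫ ≤ ‖f' (x + s • v) - f' x‖ * ‖v‖ :=
            real_inner_le_norm _ _
          have h2 : ‖f' (x + s • v) - f' x‖ ≤ L * (s * ‖v‖) := by
            have := hlip.dist_le_mul (x + s • v) x
            rw [dist_eq_norm] at this
            have h3 : dist (x + s • v) x = s * ‖v‖ := by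
              rw [dist_eq_norm]
              simp [norm_smul, abs_of_pos hs.1]
            rw [h3] at this
            simpa [Real.coe_toNNReal L hL] using this
          rw [inner_sub_left] at h1
          calc ⟪f' (x + s • v), v⟫ - ⟪f' x, v⟫ ≤ ‖f' (x + s • v) - f' x‖ * ‖v‖ := h1
            _ ≤ L * (s * ‖v‖) * ‖v‖ := by
                apply mul_le_mul_of_nonneg_right h2 (norm_nonneg _)
            _ = L * s * ‖v‖ ^ 2 := by ring
        linarith
    exact hmono (by norm_num) (by norm_num) (by norm_num)
  have h0 : φ 0 = f x := by simp [hφ]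
  have h1 : φ 1 = f y - ⟪f' x, v⟫ - L / 2 * ‖v‖ ^ 2 := by
    have hxy : x + (1:ℝ) • v = y := by rw [hv]; simp
    simp only [hφ, hxy]
    ring
  rw [h0, h1] at key
  linarith

/-- Non-convex SGD bound under the strong growth condition with
additive noise: for `η ≤ 1/(ρL)` and `t` iterations,
`min_{k<t} E‖∇f(w_k)‖² ≤ (2/(ηt))(f(w₀) − f*) + Lησ²`. -/
theorem sgd_nonconvex_rate_sgc_additive
    (d n : ℕ) (hn : 0 < n)
    (f : EuclideanSpace ℝ (Fin d) → ℝ)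
    (f' : EuclideanSpace ℝ (Fin d) → EuclideanSpace ℝ (Fin d))
    (G : EuclideanSpace ℝ (Fin d) → Fin n → EuclideanSpace ℝ (Fin d))
    (ρ L σ fstar η : ℝ) (w0 : EuclideanSpace ℝ (Fin d))
    (W : (ℕ → Fin n) → ℕ → EuclideanSpace ℝ (Fin d))
    (hL : 0 < L) (hρ : 0 < ρ)
    (hgrad : ∀ v, HasGradientAt f (f' v) v)
    (hlip : LipschitzWith (Real.toNNReal L) f')
    (hbelow : ∀ v, fstar ≤ f v)
    (hunbiased : ∀ v, (1 / (n : ℝ)) • ∑ z, G v z = f' v)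
    (hsgc : ∀ v, (1 / (n : ℝ)) * ∑ z, ‖G v z‖ ^ 2 ≤ ρ * ‖f' v‖ ^ 2 + σ ^ 2)
    (hη : 0 < η) (hη' : η ≤ 1 / (ρ * L))
    (hW0 : ∀ ω, W ω 0 = w0)
    (hWs : ∀ ω k, W ω (k + 1) = W ω k - η • G (W ω k) (ω k))
    (t : ℕ) (ht : 0 < t) :
    ∃ k < t, ExpN n k hn (fun ω => ‖f' (W ω k)‖ ^ 2)
      ≤ (2 / (η * t)) * (f w0 - fstar) + L * η * σ ^ 2 := by
  have hN : (0:ℝ) < (n:ℝ) := by exact_mod_cast hn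
  set V := Vaux G η w0 with hV
  set C : ℝ := L * η ^ 2 * σ ^ 2 / 2 with hC
  set a : ℕ → ℝ := fun k => (∑ τ : Fin k → Fin n, f (V k τ)) / (n:ℝ) ^ k with ha
  set b : ℕ → ℝ := fun k => (∑ τ : Fin k → Fin n, ‖f' (V k τ)‖ ^ 2) / (n:ℝ) ^ k with hb
  have hηρL : η * ρ * L ≤ 1 := by
    rw [le_div_iff₀ (by positivity)] at hη'
    linarith
  -- one-step expected descent at a fixed point
  have step : ∀ w : EuclideanSpace ℝ (Fin d),
      (∑ z, f (w - η • G w z)) ≤ (n:ℝ) * (f w - η / 2 * ‖f' w‖ ^ 2 + C) := by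
    intro w
    have h1 : ∀ z : Fin n, f (w - η • G w z) ≤
        f w - η * ⟪f' w, G w z⟫ + L * η ^ 2 / 2 * ‖G w z‖ ^ 2 := by
      intro z
      have := smooth_upper f f' L hL.le hgrad hlip w (w - η • G w z)
      have hsub : w - η • G w z - w = -(η • G w z) := by abel
      rw [hsub] at this
      calc f (w - η • G w z) ≤ f w + ⟪f' w, -(η • G w z)⟫ + L / 2 * ‖-(η • G w z)‖ ^ 2 := this
        _ = f w - η * ⟪f' w, G w z⟫ + L * η ^ 2 / 2 * ‖G w z‖ ^ 2 := by
            rw [inner_neg_right, real_inner_smul_right, norm_neg, norm_smul]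
            simp [abs_of_pos hη]
            ring
    have h2 : (∑ z, f (w - η • G w z)) ≤
        ∑ z : Fin n, (f w - η * ⟪f' w, G w z⟫ + L * η ^ 2 / 2 * ‖G w z‖ ^ 2) :=
      Finset.sum_le_sum fun z _ => h1 z
    have hsumG : ∑ z, G w z = (n:ℝ) • f' w := by
      rw [← hunbiased w, smul_smul]
      rw [mul_one_div, div_self hN.ne', one_smul]
    have h3 : ∑ z : Fin n, (f w - η * ⟪f' w, G w z⟫ + L * η ^ 2 / 2 * ‖G w z‖ ^ 2)
        = (n:ℝ) * f w - η * ((n:ℝ) * ‖f' w‖ ^ 2) + L * η ^ 2 / 2 * ∑ z, ‖G w z‖ ^ 2 := by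
      rw [Finset.sum_add_distrib, Finset.sum_sub_distrib, Finset.sum_const, ← Finset.mul_sum,
        ← Finset.mul_sum, ← inner_sum, hsumG, real_inner_smul_right,
        real_inner_self_eq_norm_sq]
      simp [mul_comm]
    have h4 : ∑ z, ‖G w z‖ ^ 2 ≤ (n:ℝ) * (ρ * ‖f' w‖ ^ 2 + σ ^ 2) := by
      have := hsgc w
      rw [one_div, inv_mul_le_iff₀ hN] at this
      linarith [this]
    have h5 : (∑ z, f (w - η • G w z)) ≤
        (n:ℝ) * f w - η * ((n:ℝ) * ‖f' w‖ ^ 2)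
          + L * η ^ 2 / 2 * ((n:ℝ) * (ρ * ‖f' w‖ ^ 2 + σ ^ 2)) := by
      rw [h3] at h2
      have := mul_le_mul_of_nonneg_left h4 (by positivity : (0:ℝ) ≤ L * η ^ 2 / 2)
      linarith
    have hkey : (n:ℝ) * f w - η * ((n:ℝ) * ‖f' w‖ ^ 2)
          + L * η ^ 2 / 2 * ((n:ℝ) * (ρ * ‖f' w‖ ^ 2 + σ ^ 2))
        ≤ (n:ℝ) * (f w - η / 2 * ‖f' w‖ ^ 2 + C) := by
      rw [hC]
      have hg : (0:ℝ) ≤ ‖f' w‖ ^ 2 := by positivity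
      nlinarith [mul_le_mul_of_nonneg_right hηρL hg, hN.le, hη.le,
        mul_le_mul_of_nonneg_left (mul_le_mul_of_nonneg_right hηρL hg)
          (mul_nonneg hN.le (by positivity : (0:ℝ) ≤ η / 2))]
    linarith
  -- one-step inequality for the averages
  have astep : ∀ k, a (k + 1) ≤ a k - η / 2 * b k + C := by
    intro k
    have hcard : (Fintype.card (Fin k → Fin n) : ℝ) = (n:ℝ) ^ k := by
      simp [Fintype.card_fun]
    have hsum : ∑ σ : Fin (k+1) → Fin n, f (V (k+1) σ)
        = ∑ τ : Fin k → Fin n, ∑ z : Fin n, f (V k τ - η • G (V k τ) z) := by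
      rw [sum_snoc_split (fun σ => f (V (k+1) σ))]
      refine Finset.sum_congr rfl fun τ _ => Finset.sum_congr rfl fun z _ => ?_
      rw [hV, vaux_snoc]
    have h6 : ∑ σ : Fin (k+1) → Fin n, f (V (k+1) σ)
        ≤ (n:ℝ) * ∑ τ : Fin k → Fin n, (f (V k τ) - η / 2 * ‖f' (V k τ)‖ ^ 2 + C) := by
      rw [hsum, Finset.mul_sum]
      exact Finset.sum_le_sum fun τ _ => step (V k τ)
    have h7 : ∑ τ : Fin k → Fin n, (f (V k τ) - η / 2 * ‖f' (V k τ)‖ ^ 2 + C)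
        = (∑ τ : Fin k → Fin n, f (V k τ)) - η / 2 * (∑ τ : Fin k → Fin n, ‖f' (V k τ)‖ ^ 2)
          + (n:ℝ) ^ k * C := by
      rw [Finset.sum_add_distrib, Finset.sum_sub_distrib, Finset.sum_const, ← Finset.mul_sum,
        nsmul_eq_mul, Finset.card_univ, hcard]
    have hpow : (0:ℝ) < (n:ℝ) ^ k := by positivity
    rw [ha, hb]
    simp only
    rw [div_le_iff₀ (by positivity : (0:ℝ) < (n:ℝ) ^ (k+1))]
    calc ∑ σ : Fin (k+1) → Fin n, f (V (k+1) σ)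
        ≤ (n:ℝ) * ((∑ τ : Fin k → Fin n, f (V k τ))
            - η / 2 * (∑ τ : Fin k → Fin n, ‖f' (V k τ)‖ ^ 2) + (n:ℝ) ^ k * C) := by
          rw [← h7]; exact h6
      _ = ((∑ τ : Fin k → Fin n, f (V k τ)) / (n:ℝ) ^ k
            - η / 2 * ((∑ τ : Fin k → Fin n, ‖f' (V k τ)‖ ^ 2) / (n:ℝ) ^ k) + C)
            * (n:ℝ) ^ (k+1) := by
          field_simp
          ring
  have ha0 : a 0 = f w0 := by
    rw [ha]
    simp [hV, Vaux]
  have hat : ∀ k, fstar ≤ a k := by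
    intro k
    rw [ha]
    rw [le_div_iff₀ (by positivity : (0:ℝ) < (n:ℝ) ^ k)]
    calc fstar * (n:ℝ) ^ k = ∑ _τ : Fin k → Fin n, fstar := by
          rw [Finset.sum_const, nsmul_eq_mul]
          simp [Fintype.card_fun, mul_comm]
      _ ≤ ∑ τ : Fin k → Fin n, f (V k τ) := Finset.sum_le_sum fun τ _ => hbelow _
  -- telescoping
  have tele : ∀ m, a m + η / 2 * ∑ k ∈ range m, b k ≤ a 0 + m * C := by
    intro m
    induction m with
    | zero => simp
    | succ m ih =>
        have := astep m
        rw [Finset.sum_range_succ]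
        push_cast
        linarith
  have hsumb : η / 2 * ∑ k ∈ range t, b k ≤ f w0 - fstar + t * C := by
    have := tele t
    have := hat t
    rw [ha0] at *
    linarith
  -- pick the minimizing index
  obtain ⟨k0, hk0mem, hk0min⟩ :=
    Finset.exists_min_image (range t) b ⟨0, Finset.mem_range.mpr ht⟩
  have hk0 : k0 < t := Finset.mem_range.mp hk0mem
  have htR : (0:ℝ) < (t:ℝ) := by exact_mod_cast ht
  have hmin : (t:ℝ) * b k0 ≤ ∑ k ∈ range t, b k := by
    calc (t:ℝ) * b k0 = ∑ _k ∈ range t, b k0 := by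
          rw [Finset.sum_const, nsmul_eq_mul, Finset.card_range]
      _ ≤ ∑ k ∈ range t, b k := Finset.sum_le_sum fun k hk => hk0min k hk
  have hbk0 : b k0 ≤ (2 / (η * t)) * (f w0 - fstar) + L * η * σ ^ 2 := by
    have h8 : η / 2 * ((t:ℝ) * b k0) ≤ f w0 - fstar + t * C :=
      le_trans (mul_le_mul_of_nonneg_left hmin (by positivity)) hsumb
    rw [hC] at h8
    have hpos : (0:ℝ) < η * t := by positivity
    have h9 : b k0 ≤ (2 * (f w0 - fstar) + L * η ^ 2 * σ ^ 2 * t) / (η * t) := by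
      rw [le_div_iff₀ hpos]
      have h10 : b k0 * (η * t) = η / 2 * ((t:ℝ) * b k0) * 2 := by ring
      rw [h10]
      linarith
    calc b k0 ≤ _ := h9
      _ = 2 / (η * t) * (f w0 - fstar) + L * η * σ ^ 2 := by field_simp
  -- identify ExpN with b
  have hWV : ∀ (k : ℕ) (ω : ℕ → Fin n), W ω k = V k (fun i : Fin k => ω i.val) := by
    intro k
    induction k with
    | zero => intro ω; rw [hW0]; rfl
    | succ k ih =>
        intro ω
        rw [hWs, ih]
        have hinit : (Fin.init fun i : Fin (k+1) => ω i.val) = fun i : Fin k => ω i.val := by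
          funext i
          simp [Fin.init]
        show _ = Vaux G η w0 (k+1) _
        rw [Vaux, hinit]
        simp [Fin.val_last]
        rfl
  have hExp : ExpN n k0 hn (fun ω => ‖f' (W ω k0)‖ ^ 2) = b k0 := by
    rw [ExpN, hb]
    congr 1
    refine Finset.sum_congr rfl fun σ _ => ?_
    rw [hWV]
    congr 4
    funext i
    simp [i.isLt]
  exact ⟨k0, hk0, by rw [hExp]; exact hbk0⟩
end
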